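/- For every integer k ≥ 0, the following identity of formal power series in q holds: the sum over all n of b(n;k) q^n equals q^{k²} · ∏_{j=1}^{k} (1 + q^j)/(1 − q^j), where b(n;k) is the number of basis partitions of n with Durfee square size k. -/

import Mathlib

open Finset
open scoped Classical

namespace BasisPartitions

/-! ### Ordinary partitions -/

/-- The parts of a partition, listed in weakly decreasing order. -/
def sparts {n : ℕ} (π : n.Partition) : List ℕ := π.parts.sort (· ≥ ·)

/-- `conj L j` is the number of parts that are `≥ j`, i.e. the `j`-th part of the
conjugate partition (for `j ≥ 1`). -/
def conj (L : List ℕ) (j : ℕ) : ℕ := L.countP (fun b => j ≤ b)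

/-- The Durfee square size: the largest `k` such that the `k`-th part is `≥ k`. -/
def durfee (L : List ℕ) : ℕ := (List.range L.length).countP (fun i => i + 1 ≤ L.getD i 0)

/-- The `(i+1)`-st successive rank `r_{i+1} = b_{i+1} - c_{i+1}` (0-indexed `i`). -/
def rank (L : List ℕ) (i : ℕ) : ℤ := (L.getD i 0 : ℤ) - (conj L (i + 1) : ℤ)

/-- The successive rank vector `(r_1, ..., r_k)` where `k` is the Durfee square size. -/
def ranks (L : List ℕ) : List ℤ := (List.range (durfee L)).map (rank L)

/-- A basis partition: the partitioned number is minimal among all partitions having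
the same successive rank vector. -/
def IsBasis {n : ℕ} (π : n.Partition) : Prop :=
  ∀ (m : ℕ) (π' : m.Partition), ranks (sparts π') = ranks (sparts π) → n ≤ m

/-- The signature: the number of distinct part sizes below the Durfee square. -/
def sig (L : List ℕ) : ℕ := ((L.drop (durfee L)).dedup).length

/-- `b(n;k)`: the number of basis partitions of `n` with Durfee square size `k`. -/
noncomputable def bCount (n k : ℕ) : ℕ :=
  Nat.card {π : n.Partition // IsBasis π ∧ durfee (sparts π) = k}

/-- `b(n,k,s)`: the number of basis partitions of `n` with Durfee square size `k`
and signature `s`. -/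
noncomputable def bCount3 (n k s : ℕ) : ℕ :=
  Nat.card {π : n.Partition // IsBasis π ∧ durfee (sparts π) = k ∧ sig (sparts π) = s}

/-- `B(n;j)`: the number of basis partitions of `n` with signature `j`. -/
noncomputable def BCount (n j : ℕ) : ℕ :=
  Nat.card {π : n.Partition // IsBasis π ∧ sig (sparts π) = j}

/-- Rogers–Ramanujan condition: exactly `k` parts, consecutive gaps `≥ 2`, last part `≥ 1`. -/
def RR (L : List ℕ) (k : ℕ) : Prop :=
  L.length = k ∧ (∀ i, i + 1 < k → L.getD (i + 1) 0 + 2 ≤ L.getD i 0) ∧ 1 ≤ L.getD (k - 1) 0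

/-- `t(π)` for a Rogers–Ramanujan partition: the number of gaps `> 2`, plus 1 if the
last part is `> 1`. -/
def tRR (L : List ℕ) (k : ℕ) : ℕ :=
  ((Finset.range (k - 1)).filter (fun i => L.getD (i + 1) 0 + 2 < L.getD i 0)).card +
    (if 1 < L.getD (k - 1) 0 then 1 else 0)

/-- Primary condition: exactly `k` parts, each part `≥ k`. -/
def Primary (L : List ℕ) (k : ℕ) : Prop := L.length = k ∧ ∀ x ∈ L, k ≤ x

/-- `t(π)` for a primary partition: the number of strict descents, plus 1 if the
last part is `> k`. -/
def tP (L : List ℕ) (k : ℕ) : ℕ :=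
  ((Finset.range (k - 1)).filter (fun i => L.getD (i + 1) 0 < L.getD i 0)).card +
    (if k < L.getD (k - 1) 0 then 1 else 0)

/-- A complete basis partition: every `j` with `1 ≤ j ≤ k-1` occurs as a part of `π_b`
(a row below the Durfee square) or as a part of `π_r` (a column length strictly to the
right of the Durfee square). -/
def IsComplete {n : ℕ} (π : n.Partition) : Prop :=
  ∀ j : ℕ, 1 ≤ j → j < durfee (sparts π) →
    j ∈ (sparts π).drop (durfee (sparts π)) ∨
      ∃ c : ℕ, durfee (sparts π) < c ∧ conj (sparts π) c = j

/-- `b_c(n)`: the number of complete basis partitions of `n`. -/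
noncomputable def bc (n : ℕ) : ℕ := Nat.card {π : n.Partition // IsBasis π ∧ IsComplete π}

/-! ### Partitions with non-repeating odd parts and their 2-modular graphs -/

/-- Partitions with non-repeating (distinct) odd parts. -/
def Pod {n : ℕ} (π : n.Partition) : Prop := ∀ x, Odd x → π.parts.count x ≤ 1

/-- The size (sum of entries) of the `c`-th column (1-indexed) of the 2-modular graph. -/
def mcolSize (L : List ℕ) (c : ℕ) : ℕ :=
  (L.map (fun x => if 2 * c ≤ x then 2 else if x = 2 * c - 1 then 1 else 0)).sum

/-- The length (number of entries) of the `c`-th column (1-indexed) of the 2-modular graph. -/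
def mcolLen (L : List ℕ) (c : ℕ) : ℕ := L.countP (fun x => 2 * c - 1 ≤ x)

/-- The number of entries in a row of the 2-modular graph recording the part `x`,
namely `⌈x/2⌉`. -/
def mrowLen (x : ℕ) : ℕ := (x + 1) / 2

/-- The 2-modular Durfee square size: the largest `k` with `⌈b_k/2⌉ ≥ k`. -/
def mdurfee (L : List ℕ) : ℕ := (List.range L.length).countP (fun i => 2 * i + 1 ≤ L.getD i 0)

/-- The `(i+1)`-st 2-modular successive rank: (size of row `i+1`) − (size of column `i+1`). -/
def mrank (L : List ℕ) (i : ℕ) : ℤ := (L.getD i 0 : ℤ) - (mcolSize L (i + 1) : ℤ)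

/-- The 2-modular successive rank vector. -/
def mranks (L : List ℕ) : List ℤ := (List.range (mdurfee L)).map (mrank L)

/-- A minimal basis partition in `P_{o,d}`: the partitioned number is minimal among all
partitions with non-repeating odd parts having the same 2-modular successive rank vector. -/
def MinBasis {n : ℕ} (μ : n.Partition) : Prop :=
  Pod μ ∧ ∀ (m : ℕ) (μ' : m.Partition), Pod μ' →
    mranks (sparts μ') = mranks (sparts μ) → n ≤ m

/-- A basis partition in `P_{o,d}`: no row of the 2-modular graph strictly below the Durfee
square has size equal to the size of a column strictly to the right of the Durfee square. -/
def PodBasis {n : ℕ} (π : n.Partition) : Prop :=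
  Pod π ∧ ∀ i, mdurfee (sparts π) ≤ i → i < (sparts π).length →
    ∀ c, mdurfee (sparts π) < c → mcolSize (sparts π) c ≠ (sparts π).getD i 0

/-- The signature of a basis partition in `P_{o,d}`: the number of distinct sizes among the
rows of the 2-modular graph strictly below the Durfee square. -/
def msig (L : List ℕ) : ℕ := ((L.drop (mdurfee L)).dedup).length

/-- The ℓ-signature: the number of distinct lengths among the rows of the 2-modular
graph strictly below the Durfee square. -/
def lsig (L : List ℕ) : ℕ := (((L.drop (mdurfee L)).map mrowLen).dedup).length

/-- `b(n;j)` for `P_{o,d}`: the number of basis partitions of `n` in `P_{o,d}` with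
signature `j`. -/
noncomputable def podB (n j : ℕ) : ℕ := Nat.card {π : n.Partition // PodBasis π ∧ msig (sparts π) = j}

/-- The number of odd parts. -/
def numOdd (L : List ℕ) : ℕ := L.countP (fun x => x % 2 = 1)

/-- A special partition: distinct parts with consecutive differences `≥ 4`, where a
difference equal to `4` is permitted only when both parts are even. -/
def Special (L : List ℕ) : Prop :=
  ∀ i, i + 1 < L.length →
    L.getD (i + 1) 0 + 4 ≤ L.getD i 0 ∧
      (L.getD i 0 = L.getD (i + 1) 0 + 4 → Even (L.getD i 0) ∧ Even (L.getD (i + 1) 0))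

/-- The `i`-th part of a special partition, with the convention that the part just after
the last one is `-2`. -/
def hpart (L : List ℕ) (i : ℕ) : ℤ := if i < L.length then (L.getD i 0 : ℤ) else -2

/-- `ℓ(π)`: the number of gaps `> 4` in a special partition, with the convention
`h_{k+1} = -2`. -/
def ell (L : List ℕ) : ℕ :=
  ((Finset.range L.length).filter (fun i => 4 < hpart L i - hpart L (i + 1))).card


/-! ### Auxiliary list lemmas -/

section Aux

lemma downclosed_eq_range (S : Finset ℕ) (h : ∀ i j, i ≤ j → j ∈ S → i ∈ S) :
    S = Finset.range S.card := by
  ext x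
  simp only [Finset.mem_range]
  constructor
  · intro hx
    by_contra hc
    push_neg at hc
    have hsub : Finset.range (x + 1) ⊆ S := by
      intro i hi
      exact h i x (by simpa using Nat.lt_succ_iff.mp (Finset.mem_range.mp hi)) hx
    have := Finset.card_le_card hsub
    simp only [Finset.card_range] at this
    omega
  · intro hx
    by_contra hc
    have hsub : S ⊆ Finset.range x := by
      intro y hy
      simp only [Finset.mem_range]
      by_contra hy2
      exact hc (h x y (by omega) hy)
    have := Finset.card_le_card hsub
    simp only [Finset.card_range] at this
    omega

lemma countP_range_eq_card (n : ℕ) (p : ℕ → Prop) [DecidablePred p] :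
    (List.range n).countP (fun i => decide (p i)) = ((Finset.range n).filter p).card := by
  induction n with
  | zero => simp
  | succ m ih =>
    rw [List.range_succ, List.countP_append, ih, Finset.range_add_one, Finset.filter_insert]
    by_cases h : p m
    · rw [if_pos h, Finset.card_insert_of_notMem (by simp)]
      simp [h]
    · rw [if_neg h]
      simp [h]

lemma getD_anti {L : List ℕ} (hs : L.Pairwise (· ≥ ·)) {i j : ℕ} (hij : i ≤ j) :
    L.getD j 0 ≤ L.getD i 0 := by
  rcases eq_or_lt_of_le hij with rfl | hlt
  · exact le_refl _
  by_cases hj : j < L.length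
  · have hi : i < L.length := lt_trans hlt hj
    rw [List.getD_eq_getElem _ _ hj, List.getD_eq_getElem _ _ hi]
    exact List.pairwise_iff_getElem.mp hs i j hi hj hlt
  · rw [List.getD_eq_default _ _ (by omega)]
    exact Nat.zero_le _

lemma dp_lt_length {L : List ℕ} {i : ℕ} (h : i + 1 ≤ L.getD i 0) : i < L.length := by
  by_contra hc
  rw [List.getD_eq_default _ _ (by omega)] at h
  omega

lemma durfee_eq_card (L : List ℕ) :
    durfee L = ((Finset.range L.length).filter (fun i => i + 1 ≤ L.getD i 0)).card :=
  countP_range_eq_card _ _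

lemma durfee_filter_eq_range {L : List ℕ} (hs : L.Pairwise (· ≥ ·)) :
    ((Finset.range L.length).filter (fun i => i + 1 ≤ L.getD i 0)) = Finset.range (durfee L) := by
  rw [durfee_eq_card]
  apply downclosed_eq_range
  intro i j hij hj
  simp only [Finset.mem_filter, Finset.mem_range] at hj ⊢
  refine ⟨by omega, ?_⟩
  calc i + 1 ≤ j + 1 := by omega
    _ ≤ L.getD j 0 := hj.2
    _ ≤ L.getD i 0 := getD_anti hs hij

lemma durfee_eq_iff {L : List ℕ} (hs : L.Pairwise (· ≥ ·)) {k : ℕ} :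
    durfee L = k ↔ (∀ i < k, i + 1 ≤ L.getD i 0) ∧ L.getD k 0 ≤ k := by
  have hmem : ∀ i, i ∈ ((Finset.range L.length).filter (fun i => i + 1 ≤ L.getD i 0)) ↔
      i + 1 ≤ L.getD i 0 := by
    intro i
    simp only [Finset.mem_filter, Finset.mem_range]
    exact ⟨fun h => h.2, fun h => ⟨dp_lt_length h, h⟩⟩
  constructor
  · rintro rfl
    constructor
    · intro i hi
      have : i ∈ Finset.range (durfee L) := Finset.mem_range.mpr hi
      rw [← durfee_filter_eq_range hs, hmem] at this
      exact this
    · by_contra hc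
      push_neg at hc
      have : durfee L ∈ Finset.range (durfee L) := by
        rw [← durfee_filter_eq_range hs, hmem]; omega
      simp at this
  · rintro ⟨h1, h2⟩
    have : ((Finset.range L.length).filter (fun i => i + 1 ≤ L.getD i 0)) = Finset.range k := by
      ext i
      rw [hmem, Finset.mem_range]
      constructor
      · intro hp
        by_contra hc
        have : k + 1 ≤ L.getD k 0 :=
          le_trans (by omega) (le_trans hp (getD_anti hs (by omega)))
        omega
      · exact fun hik => h1 i hik
    rw [durfee_eq_card, this, Finset.card_range]

lemma durfee_le_length (L : List ℕ) : durfee L ≤ L.length := by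
  rw [durfee_eq_card]
  exact le_trans (Finset.card_filter_le _ _) (by simp)

lemma getD_ge_durfee {L : List ℕ} (hs : L.Pairwise (· ≥ ·)) {i : ℕ} (hi : i < durfee L) :
    durfee L ≤ L.getD i 0 := by
  obtain ⟨h1, -⟩ := (durfee_eq_iff hs).mp (rfl : durfee L = durfee L)
  calc durfee L = (durfee L - 1) + 1 := by omega
    _ ≤ L.getD (durfee L - 1) 0 := h1 _ (by omega)
    _ ≤ L.getD i 0 := getD_anti hs (by omega)

lemma getD_le_durfee {L : List ℕ} (hs : L.Pairwise (· ≥ ·)) {i : ℕ} (hi : durfee L ≤ i) :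
    L.getD i 0 ≤ durfee L := by
  obtain ⟨-, h2⟩ := (durfee_eq_iff hs).mp (rfl : durfee L = durfee L)
  exact le_trans (getD_anti hs hi) h2

end Aux
/-! ### The `(α, β')` decomposition of a partition list -/

section Decomp

/-- Row excesses over the Durfee square (0 beyond). -/
def aseq (L : List ℕ) (i : ℕ) : ℕ := L.getD i 0 - durfee L

/-- Column counts of the part below the Durfee square. -/
def bseq (L : List ℕ) (j : ℕ) : ℕ := (L.drop (durfee L)).countP (fun x => decide (j ≤ x))

/-- The extended rank sequence. -/
def zrank (L : List ℕ) (i : ℕ) : ℤ := (aseq L i : ℤ) - (bseq L (i + 1) : ℤ)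

lemma aseq_zero {L : List ℕ} (hs : L.Pairwise (· ≥ ·)) {i : ℕ} (hi : durfee L ≤ i) :
    aseq L i = 0 := by
  have := getD_le_durfee hs hi
  unfold aseq; omega

lemma getD_eq_add_aseq {L : List ℕ} (hs : L.Pairwise (· ≥ ·)) {i : ℕ} (hi : i < durfee L) :
    L.getD i 0 = durfee L + aseq L i := by
  have := getD_ge_durfee hs hi
  unfold aseq; omega

lemma aseq_anti {L : List ℕ} (hs : L.Pairwise (· ≥ ·)) {i j : ℕ} (hij : i ≤ j) :
    aseq L j ≤ aseq L i := by
  have := getD_anti hs hij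
  unfold aseq; omega

lemma bseq_anti (L : List ℕ) {i j : ℕ} (hij : i ≤ j) : bseq L j ≤ bseq L i :=
  List.countP_mono_left (fun x _ h => by
    simp only [decide_eq_true_eq] at h ⊢; omega)

lemma mem_drop_le {L : List ℕ} (hs : L.Pairwise (· ≥ ·)) {x : ℕ}
    (hx : x ∈ L.drop (durfee L)) : x ≤ durfee L := by
  obtain ⟨t, ht, rfl⟩ := List.mem_iff_getElem.mp hx
  rw [List.getElem_drop]
  have hlen : durfee L + t < L.length := by
    have := List.length_drop (i := durfee L) (l := L)
    omega
  rw [← List.getD_eq_getElem _ 0 hlen]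
  exact getD_le_durfee hs (by omega)

lemma bseq_durfee_succ {L : List ℕ} (hs : L.Pairwise (· ≥ ·)) : bseq L (durfee L + 1) = 0 := by
  rw [bseq, List.countP_eq_zero]
  intro x hx
  have := mem_drop_le hs hx
  simp only [decide_eq_true_eq]
  omega

lemma bseq_zero {L : List ℕ} (hs : L.Pairwise (· ≥ ·)) {j : ℕ} (hj : durfee L + 1 ≤ j) :
    bseq L j = 0 :=
  Nat.le_zero.mp (le_trans (bseq_anti L hj) (le_of_eq (bseq_durfee_succ hs)))

lemma conj_eq {L : List ℕ} (hs : L.Pairwise (· ≥ ·)) {j : ℕ} (hj1 : 1 ≤ j)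
    (hjk : j ≤ durfee L) : conj L j = durfee L + bseq L j := by
  have hk : durfee L ≤ L.length := durfee_le_length L
  conv_lhs => rw [conj, ← List.take_append_drop (durfee L) L]
  rw [List.countP_append]
  congr 1
  rw [List.countP_eq_length.mpr, List.length_take]
  · omega
  · intro a ha
    obtain ⟨i, hm, rfl⟩ := List.mem_take_iff_getElem.mp ha
    have hik : i < durfee L := by omega
    have hil : i < L.length := by omega
    simp only [decide_eq_true_eq]
    rw [← List.getD_eq_getElem _ 0 hil]
    exact le_trans hjk (getD_ge_durfee hs hik)

lemma rank_eq_zrank {L : List ℕ} (hs : L.Pairwise (· ≥ ·)) {i : ℕ} (hi : i < durfee L) :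
    rank L i = zrank L i := by
  rw [rank, zrank, conj_eq hs (by omega) (by omega), getD_eq_add_aseq hs hi]
  push_cast
  ring

lemma zrank_zero {L : List ℕ} (hs : L.Pairwise (· ≥ ·)) {i : ℕ} (hi : durfee L ≤ i) :
    zrank L i = 0 := by
  rw [zrank, aseq_zero hs hi, bseq_zero hs (by omega)]
  simp

lemma ranks_eq {L : List ℕ} (hs : L.Pairwise (· ≥ ·)) :
    ranks L = (List.range (durfee L)).map (zrank L) := by
  rw [ranks]
  apply List.map_congr_left
  intro i hi
  exact rank_eq_zrank hs (List.mem_range.mp hi)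

lemma list_sum_getD (L : List ℕ) : L.sum = ∑ i ∈ Finset.range L.length, L.getD i 0 := by
  induction L with
  | nil => simp
  | cons x T ih =>
    rw [List.sum_cons, List.length_cons, Finset.sum_range_succ', ih]
    simp [List.getD]
    ring

lemma tail_sum {T : List ℕ} {k : ℕ} (hT : ∀ x ∈ T, x ≤ k) :
    T.sum = ∑ j ∈ Finset.range k, T.countP (fun x => decide (j + 1 ≤ x)) := by
  induction T with
  | nil => simp
  | cons x T ih =>
    rw [List.sum_cons, ih (fun y hy => hT y (List.mem_cons_of_mem _ hy))]
    have hx : x ≤ k := hT x (List.mem_cons_self)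
    have : ∀ j ∈ Finset.range k,
        List.countP (fun y => decide (j + 1 ≤ y)) (x :: T)
          = List.countP (fun y => decide (j + 1 ≤ y)) T + if j + 1 ≤ x then 1 else 0 := by
      intro j _
      rw [List.countP_cons]
      congr 1
      simp
    rw [Finset.sum_congr rfl this, Finset.sum_add_distrib, Finset.sum_boole]
    have : (Finset.range k).filter (fun j => j + 1 ≤ x) = Finset.range x := by
      ext j
      simp only [Finset.mem_filter, Finset.mem_range]
      omega
    rw [this]
    simp [add_comm]

lemma sum_eq {L : List ℕ} (hs : L.Pairwise (· ≥ ·)) :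
    L.sum = durfee L * durfee L + (∑ i ∈ Finset.range (durfee L), aseq L i)
      + ∑ j ∈ Finset.range (durfee L), bseq L (j + 1) := by
  set k := durfee L with hk
  have hkl : k ≤ L.length := durfee_le_length L
  conv_lhs => rw [← List.take_append_drop k L]
  rw [List.sum_append]
  have htake : (L.take k).sum = k * k + ∑ i ∈ Finset.range k, aseq L i := by
    rw [list_sum_getD]
    have hlen : (L.take k).length = k := by
      rw [List.length_take]; omega
    rw [hlen]
    have : ∀ i ∈ Finset.range k, (L.take k).getD i 0 = k + aseq L i := by
      intro i hi
      have hik : i < k := Finset.mem_range.mp hi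
      have h1 : i < (L.take k).length := by omega
      rw [List.getD_eq_getElem _ _ h1, List.getElem_take,
        ← List.getD_eq_getElem _ 0 (by omega : i < L.length)]
      exact getD_eq_add_aseq hs hik
    rw [Finset.sum_congr rfl this, Finset.sum_add_distrib]
    simp [Finset.sum_const, mul_comm]
  have hdrop : (L.drop k).sum = ∑ j ∈ Finset.range k, bseq L (j + 1) := by
    rw [tail_sum (fun x hx => mem_drop_le hs hx)]
    rfl
  rw [htake, hdrop]

end Decomp
/-! ### Building a partition list from `(A, B)` data -/

section Build

/-- The rows below the Durfee square, built as the conjugate of `B` on `[1, k]`. -/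
def buildTail (k : ℕ) (B : ℕ → ℕ) : List ℕ :=
  (List.range (B 1)).map (fun t => ((Finset.Icc 1 k).filter (fun j => t + 1 ≤ B j)).card)

/-- The partition list with Durfee square `k`, row excesses `A` and lower column counts `B`. -/
def build (k : ℕ) (A B : ℕ → ℕ) : List ℕ :=
  (List.range k).map (fun i => k + A i) ++ buildTail k B

variable {k : ℕ} {A B : ℕ → ℕ}

lemma buildTail_mem (hB : ∀ i j, i ≤ j → B j ≤ B i) (hBk : B (k + 1) = 0) {x : ℕ} (hx : x ∈ buildTail k B) : 1 ≤ x ∧ x ≤ k := by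
  rw [buildTail, List.mem_map] at hx
  obtain ⟨t, ht, rfl⟩ := hx
  rw [List.mem_range] at ht
  constructor
  · have hk1 : 1 ≤ k := by
      by_contra hc
      have : B 1 ≤ B (k + 1) := hB _ _ (by omega)
      omega
    have h1 : (1 : ℕ) ∈ (Finset.Icc 1 k).filter (fun j => t + 1 ≤ B j) := by
      simp only [Finset.mem_filter, Finset.mem_Icc]
      omega
    exact Finset.card_pos.mpr ⟨1, h1⟩
  · exact le_trans (Finset.card_filter_le _ _) (by simp)

lemma buildTail_countP (hB : ∀ i j, i ≤ j → B j ≤ B i) {j : ℕ} (hj1 : 1 ≤ j) (hjk : j ≤ k) :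
    (buildTail k B).countP (fun x => decide (j ≤ x)) = B j := by
  rw [buildTail, List.countP_map]
  have key : ∀ t, ((fun x => decide (j ≤ x)) ∘
      (fun t => ((Finset.Icc 1 k).filter (fun j => t + 1 ≤ B j)).card)) t
      = decide (t + 1 ≤ B j) := by
    intro t
    simp only [Function.comp_apply, decide_eq_decide]
    constructor
    · intro h
      by_contra hc
      have hsub : (Finset.Icc 1 k).filter (fun i => t + 1 ≤ B i) ⊆ Finset.Icc 1 (j - 1) := by
        intro i hi
        simp only [Finset.mem_filter, Finset.mem_Icc] at hi ⊢
        refine ⟨hi.1.1, ?_⟩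
        by_contra hij
        have : B i ≤ B j := hB _ _ (by omega)
        omega
      have := Finset.card_le_card hsub
      rw [Nat.card_Icc] at this
      omega
    · intro h
      have hsub : Finset.Icc 1 j ⊆ (Finset.Icc 1 k).filter (fun i => t + 1 ≤ B i) := by
        intro i hi
        simp only [Finset.mem_Icc] at hi
        simp only [Finset.mem_filter, Finset.mem_Icc]
        exact ⟨⟨hi.1, by omega⟩, le_trans h (hB _ _ hi.2)⟩
      have := Finset.card_le_card hsub
      rw [Nat.card_Icc] at this
      omega
  rw [List.countP_congr (fun t _ => by rw [key t])]
  rw [countP_range_eq_card]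
  have : (Finset.range (B 1)).filter (fun t => t + 1 ≤ B j) = Finset.range (B j) := by
    have : B j ≤ B 1 := hB _ _ hj1
    ext t
    simp only [Finset.mem_filter, Finset.mem_range]
    omega
  rw [this, Finset.card_range]

lemma buildTail_sorted : (buildTail k B).Pairwise (· ≥ ·) := by
  rw [buildTail, List.pairwise_map]
  refine List.pairwise_lt_range.imp ?_
  intro a b hab
  apply Finset.card_le_card
  intro i hi
  simp only [Finset.mem_filter] at hi ⊢
  exact ⟨hi.1, by omega⟩

lemma build_sorted (hA : ∀ i j, i ≤ j → A j ≤ A i)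
    (hB : ∀ i j, i ≤ j → B j ≤ B i) (hBk : B (k + 1) = 0) : (build k A B).Pairwise (· ≥ ·) := by
  rw [build, List.pairwise_append]
  refine ⟨?_, buildTail_sorted, ?_⟩
  · rw [List.pairwise_map]
    refine List.pairwise_lt_range.imp ?_
    intro a b hab
    have := hA a b (le_of_lt hab)
    omega
  · intro a ha b hb
    rw [List.mem_map] at ha
    obtain ⟨i, -, rfl⟩ := ha
    have := (buildTail_mem hB hBk hb).2
    omega

lemma build_pos (hB : ∀ i j, i ≤ j → B j ≤ B i) (hBk : B (k + 1) = 0) {x : ℕ} (hx : x ∈ build k A B) : 0 < x := by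
  rw [build, List.mem_append] at hx
  rcases hx with hx | hx
  · rw [List.mem_map] at hx
    obtain ⟨i, hi, rfl⟩ := hx
    rw [List.mem_range] at hi
    omega
  · exact (buildTail_mem hB hBk hx).1

lemma build_getD_lt {i : ℕ} (hi : i < k) : (build k A B).getD i 0 = k + A i := by
  have h1 : i < ((List.range k).map (fun i => k + A i)).length := by simp [hi]
  rw [build, List.getD_eq_getElem _ 0 (by rw [List.length_append]; omega),
    List.getElem_append_left h1, List.getElem_map, List.getElem_range]

lemma build_drop : (build k A B).drop k = buildTail k B := by
  have h := List.drop_left (l₁ := (List.range k).map (fun i => k + A i)) (l₂ := buildTail k B)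
  simpa [build] using h

lemma build_durfee (hA : ∀ i j, i ≤ j → A j ≤ A i)
    (hB : ∀ i j, i ≤ j → B j ≤ B i) (hBk : B (k + 1) = 0) : durfee (build k A B) = k := by
  rw [durfee_eq_iff (build_sorted hA hB hBk)]
  constructor
  · intro i hi
    rw [build_getD_lt hi]
    omega
  · by_cases hlen : k < (build k A B).length
    · rw [List.getD_eq_getElem _ 0 hlen]
      have hmem : (build k A B)[k] ∈ buildTail k B := by
        rw [← build_drop (A := A), List.mem_iff_getElem]
        refine ⟨0, ?_, ?_⟩
        · rw [List.length_drop]; omega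
        · rw [List.getElem_drop]
          norm_num
      exact (buildTail_mem hB hBk hmem).2
    · rw [List.getD_eq_default _ _ (by omega)]
      omega

lemma build_aseq (hA : ∀ i j, i ≤ j → A j ≤ A i)
    (hB : ∀ i j, i ≤ j → B j ≤ B i) (hBk : B (k + 1) = 0) (i : ℕ) (hAk : A k = 0) : aseq (build k A B) i = A i := by
  rw [aseq, build_durfee hA hB hBk]
  by_cases hi : i < k
  · rw [build_getD_lt hi]; omega
  · have h1 : A i ≤ A k := hA _ _ (by omega)
    have h2 : (build k A B).getD i 0 ≤ k := by
      have := getD_le_durfee (build_sorted hA hB hBk)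
        (i := i) (by rw [build_durfee hA hB hBk]; omega)
      rwa [build_durfee hA hB hBk] at this
    omega

lemma build_bseq (hA : ∀ i j, i ≤ j → A j ≤ A i)
    (hB : ∀ i j, i ≤ j → B j ≤ B i) (hBk : B (k + 1) = 0) (j : ℕ) (hj1 : 1 ≤ j) : bseq (build k A B) j = B j := by
  rw [bseq, build_durfee hA hB hBk, build_drop]
  by_cases hjk : j ≤ k
  · exact buildTail_countP hB hj1 hjk
  · have h0 : B j ≤ B (k + 1) := hB _ _ (by omega)
    rw [List.countP_eq_zero.mpr]
    · omega
    · intro x hx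
      have := (buildTail_mem hB hBk hx).2
      simp only [decide_eq_true_eq]
      omega

end Build
/-! ### Realizing lists as partitions, and the basis criterion -/

section Basis

lemma sparts_sorted {n : ℕ} (π : n.Partition) : (sparts π).Pairwise (· ≥ ·) :=
  Multiset.pairwise_sort _ _

lemma sparts_pos {n : ℕ} (π : n.Partition) : ∀ x ∈ sparts π, 0 < x := fun x hx =>
  π.parts_pos (by rwa [sparts, Multiset.mem_sort] at hx)

lemma sparts_sum {n : ℕ} (π : n.Partition) : (sparts π).sum = n := by
  have h := π.parts_sum
  rw [← Multiset.sort_eq π.parts (· ≥ ·), Multiset.sum_coe] at h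
  exact h

/-- Realize a sorted positive list as a partition of its sum. -/
def realize (L : List ℕ) (hpos : ∀ x ∈ L, 0 < x) : (L.sum).Partition :=
  ⟨(L : Multiset ℕ), fun hi => hpos _ hi, Multiset.sum_coe L⟩

lemma sparts_realize {L : List ℕ} (hs : L.Pairwise (· ≥ ·)) (hpos : ∀ x ∈ L, 0 < x) :
    sparts (realize L hpos) = L := by
  rw [sparts, realize]
  refine List.Perm.eq_of_pairwise' (Multiset.pairwise_sort _ _) hs ?_
  rw [← Multiset.coe_eq_coe, Multiset.sort_eq]

/-- The Nolan–Savage–Wilf criterion: no simultaneous strict drop of row excesses and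
column counts. -/
def Cond (L : List ℕ) : Prop :=
  ∀ j < durfee L, ¬(aseq L (j + 1) < aseq L j ∧ bseq L (j + 2) < bseq L (j + 1))

lemma zrank_eq_of_ranks_eq {L L' : List ℕ} (hs : L.Pairwise (· ≥ ·)) (hs' : L'.Pairwise (· ≥ ·))
    (hr : ranks L' = ranks L) : durfee L' = durfee L ∧ ∀ i, zrank L' i = zrank L i := by
  have hk' : durfee L' = durfee L := by
    have := congrArg List.length hr
    simpa [ranks] using this
  refine ⟨hk', fun i => ?_⟩
  by_cases hi : i < durfee L
  · have h1 := ranks_eq hs'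
    rw [hr, ranks_eq hs, hk'] at h1
    exact (List.map_inj_left.mp h1.symm i (List.mem_range.mpr hi))
  · rw [zrank_zero hs' (by omega), zrank_zero hs (by omega)]

lemma sum_le_of_cond {L L' : List ℕ} (hs : L.Pairwise (· ≥ ·)) (hs' : L'.Pairwise (· ≥ ·))
    (hC : Cond L) (hr : ranks L' = ranks L) : L.sum ≤ L'.sum := by
  obtain ⟨hk', hzr⟩ := zrank_eq_of_ranks_eq hs hs' hr
  set k := durfee L with hkdef
  have key : ∀ m j, 1 ≤ j → k + 1 ≤ j + m → bseq L j ≤ bseq L' j := by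
    intro m
    induction m with
    | zero =>
      intro j hj1 hj2
      rw [bseq_zero hs (by omega)]
      exact Nat.zero_le _
    | succ m ih =>
      intro j hj1 hj2
      by_cases hcase : k + 1 ≤ j + m
      · exact ih j hj1 hcase
      · have hjk : j ≤ k := by omega
        have hmono : bseq L (j + 1) ≤ bseq L j := bseq_anti L (by omega)
        by_cases heq : bseq L j = bseq L (j + 1)
        · calc bseq L j = bseq L (j + 1) := heq
            _ ≤ bseq L' (j + 1) := ih (j + 1) (by omega) (by omega)
            _ ≤ bseq L' j := bseq_anti L' (by omega)
        · have hlt : bseq L (j + 1) < bseq L j := by omega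
          have hC0 := hC (j - 1) (by omega)
          have hjj : j - 1 + 1 = j := by omega
          have hjj2 : j - 1 + 2 = j + 1 := by omega
          rw [hjj, hjj2] at hC0
          have haux : ¬ (aseq L j < aseq L (j - 1)) := fun h => hC0 ⟨h, hlt⟩
          have haeq : aseq L (j - 1) = aseq L j := by
            have h1 := aseq_anti hs (show j - 1 ≤ j by omega)
            omega
          have z1 : zrank L (j - 1) = (aseq L (j - 1) : ℤ) - (bseq L j : ℤ) := by
            rw [zrank, hjj]
          have z2 : zrank L j = (aseq L j : ℤ) - (bseq L (j + 1) : ℤ) := rfl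
          have z1' : zrank L' (j - 1) = (aseq L' (j - 1) : ℤ) - (bseq L' j : ℤ) := by
            rw [zrank, hjj]
          have z2' : zrank L' j = (aseq L' j : ℤ) - (bseq L' (j + 1) : ℤ) := rfl
          have ha' : aseq L' j ≤ aseq L' (j - 1) := aseq_anti hs' (by omega)
          have hIH : bseq L (j + 1) ≤ bseq L' (j + 1) := ih (j + 1) (by omega) (by omega)
          have e1 := hzr (j - 1)
          have e2 := hzr j
          omega
  have h1 := sum_eq hs
  have h2 := sum_eq hs'
  rw [hk'] at h2
  have hle : ∀ i ∈ Finset.range k, (aseq L i : ℤ) + (bseq L (i + 1) : ℤ)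
      ≤ (aseq L' i : ℤ) + (bseq L' (i + 1) : ℤ) := by
    intro i hi
    have hb := key k (i + 1) (by omega) (by omega)
    have e := hzr i
    rw [zrank, zrank] at e
    omega
  have h1z : (L.sum : ℤ) = (k * k : ℕ)
      + ∑ i ∈ Finset.range k, ((aseq L i : ℤ) + (bseq L (i + 1) : ℤ)) := by
    rw [h1, Finset.sum_add_distrib]
    push_cast
    ring
  have h2z : (L'.sum : ℤ) = (k * k : ℕ)
      + ∑ i ∈ Finset.range k, ((aseq L' i : ℤ) + (bseq L' (i + 1) : ℤ)) := by
    rw [h2, Finset.sum_add_distrib]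
    push_cast
    ring
  have := Finset.sum_le_sum hle
  have hfin : (L.sum : ℤ) ≤ (L'.sum : ℤ) := by rw [h1z, h2z]; omega
  exact_mod_cast hfin

lemma exists_smaller {L : List ℕ} (hs : L.Pairwise (· ≥ ·)) (hnc : ¬ Cond L) :
    ∃ L' : List ℕ, L'.Pairwise (· ≥ ·) ∧ (∀ x ∈ L', 0 < x) ∧ ranks L' = ranks L
      ∧ L'.sum < L.sum := by
  set k := durfee L with hkdef
  rw [Cond] at hnc
  push_neg at hnc
  obtain ⟨j, hj, ha, hb⟩ := hnc
  set A' : ℕ → ℕ := fun i => aseq L i - (if i ≤ j then 1 else 0) with hA'def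
  set B' : ℕ → ℕ := fun i => bseq L i - (if i ≤ j + 1 then 1 else 0) with hB'def
  have hage : ∀ i, i ≤ j → 1 ≤ aseq L i := by
    intro i hi
    have := aseq_anti hs hi
    omega
  have hbge : ∀ i, i ≤ j + 1 → 1 ≤ bseq L i := by
    intro i hi
    have := bseq_anti L hi
    omega
  have hA'anti : ∀ i₁ i₂, i₁ ≤ i₂ → A' i₂ ≤ A' i₁ := by
    intro i₁ i₂ h12
    have h3 := aseq_anti hs h12
    simp only [hA'def]
    by_cases c1 : i₁ ≤ j
    · by_cases c2 : i₂ ≤ j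
      · simp only [if_pos c1, if_pos c2]; omega
      · have h4 : aseq L i₂ ≤ aseq L (j + 1) := aseq_anti hs (by omega)
        have h5 := aseq_anti hs c1
        simp only [if_pos c1, if_neg c2]
        omega
    · have c2 : ¬ i₂ ≤ j := by omega
      simp only [if_neg c1, if_neg c2]
      omega
  have hB'anti : ∀ i₁ i₂, i₁ ≤ i₂ → B' i₂ ≤ B' i₁ := by
    intro i₁ i₂ h12
    have h3 := bseq_anti L h12
    simp only [hB'def]
    by_cases c1 : i₁ ≤ j + 1
    · by_cases c2 : i₂ ≤ j + 1
      · simp only [if_pos c1, if_pos c2]; omega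
      · have h4 : bseq L i₂ ≤ bseq L (j + 2) := bseq_anti L (by omega)
        have h5 := bseq_anti L c1
        simp only [if_pos c1, if_neg c2]
        omega
    · have c2 : ¬ i₂ ≤ j + 1 := by omega
      simp only [if_neg c1, if_neg c2]
      omega
  have hA'k : A' k = 0 := by
    simp only [hA'def, if_neg (show ¬ k ≤ j by omega)]
    rw [aseq_zero hs (le_refl _)]
  have hB'k : B' (k + 1) = 0 := by
    simp only [hB'def, if_neg (show ¬ k + 1 ≤ j + 1 by omega)]
    rw [bseq_zero hs (le_refl _)]
  refine ⟨build k A' B', build_sorted hA'anti hB'anti hB'k, fun x hx => build_pos hB'anti hB'k hx, ?_, ?_⟩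
  · rw [ranks_eq (build_sorted hA'anti hB'anti hB'k), ranks_eq hs,
      build_durfee hA'anti hB'anti hB'k]
    apply List.map_congr_left
    intro i hi
    have hik : i < k := List.mem_range.mp hi
    rw [zrank, zrank, build_aseq hA'anti hB'anti hB'k i hA'k,
      build_bseq hA'anti hB'anti hB'k (i + 1) (by omega)]
    simp only [hA'def, hB'def]
    by_cases c : i ≤ j
    · rw [if_pos c, if_pos (show i + 1 ≤ j + 1 by omega)]
      have := hage i c
      have := hbge (i + 1) (by omega)
      push_cast [Nat.cast_sub]
      omega
    · rw [if_neg c, if_neg (show ¬ i + 1 ≤ j + 1 by omega)]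
      simp
  · have hsum' := sum_eq (build_sorted hA'anti hB'anti hB'k)
    rw [build_durfee hA'anti hB'anti hB'k] at hsum'
    have hsum := sum_eq hs
    rw [← hkdef] at hsum
    have eA : ∀ i ∈ Finset.range k, aseq (build k A' B') i
        = aseq L i - (if i ≤ j then 1 else 0) :=
      fun i _ => build_aseq hA'anti hB'anti hB'k i hA'k
    have eB : ∀ i ∈ Finset.range k, bseq (build k A' B') (i + 1)
        = bseq L (i + 1) - (if i + 1 ≤ j + 1 then 1 else 0) :=
      fun i _ => build_bseq hA'anti hB'anti hB'k (i + 1) (by omega)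
    rw [Finset.sum_congr rfl eA, Finset.sum_congr rfl eB] at hsum'
    have hsA : ∑ i ∈ Finset.range k, (aseq L i - (if i ≤ j then 1 else 0))
        = (∑ i ∈ Finset.range k, aseq L i) - (j + 1) := by
      have e1 : ∀ i ∈ Finset.range k, aseq L i
          = (aseq L i - (if i ≤ j then 1 else 0)) + (if i ≤ j then 1 else 0) := by
        intro i _
        by_cases c : i ≤ j
        · have := hage i c; simp [c]; omega
        · simp [c]
      rw [Finset.sum_congr rfl e1, Finset.sum_add_distrib, Finset.sum_boole]
      have : (Finset.range k).filter (fun i => i ≤ j) = Finset.range (j + 1) := by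
        ext i
        simp only [Finset.mem_filter, Finset.mem_range]
        omega
      rw [this, Finset.card_range]
      simp
    have hsB : ∑ i ∈ Finset.range k, (bseq L (i + 1) - (if i + 1 ≤ j + 1 then 1 else 0))
        = (∑ i ∈ Finset.range k, bseq L (i + 1)) - (j + 1) := by
      have e1 : ∀ i ∈ Finset.range k, bseq L (i + 1)
          = (bseq L (i + 1) - (if i + 1 ≤ j + 1 then 1 else 0)) + (if i + 1 ≤ j + 1 then 1 else 0) := by
        intro i _
        by_cases c : i + 1 ≤ j + 1
        · have := hbge (i + 1) c; simp [c]; omega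
        · simp [c]
      rw [Finset.sum_congr rfl e1, Finset.sum_add_distrib, Finset.sum_boole]
      have : (Finset.range k).filter (fun i => i + 1 ≤ j + 1) = Finset.range (j + 1) := by
        ext i
        simp only [Finset.mem_filter, Finset.mem_range]
        omega
      rw [this, Finset.card_range]
      simp
    have hAsumge : j + 1 ≤ ∑ i ∈ Finset.range k, aseq L i := by
      have e1 : ∀ i ∈ Finset.range (j + 1), 1 ≤ aseq L i := fun i hi =>
        hage i (by have := Finset.mem_range.mp hi; omega)
      calc j + 1 = ∑ _i ∈ Finset.range (j + 1), 1 := by simp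
        _ ≤ ∑ i ∈ Finset.range (j + 1), aseq L i := Finset.sum_le_sum e1
        _ ≤ ∑ i ∈ Finset.range k, aseq L i := by
            apply Finset.sum_le_sum_of_subset
            intro x hx
            simp only [Finset.mem_range] at hx ⊢
            omega
    rw [hsA, hsB] at hsum'
    omega

lemma isBasis_iff_cond {n : ℕ} (π : n.Partition) : IsBasis π ↔ Cond (sparts π) := by
  constructor
  · intro hbasis
    by_contra hnc
    obtain ⟨L', hs', hpos', hr', hlt⟩ := exists_smaller (sparts_sorted π) hnc
    have h1 := hbasis L'.sum (realize L' hpos') (by rw [sparts_realize hs' hpos', hr'])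
    have h2 := sparts_sum π
    omega
  · intro hC m π' hr
    have h := sum_le_of_cond (sparts_sorted π) (sparts_sorted π') hC hr
    rw [sparts_sum, sparts_sum] at h
    exact h

end Basis
/-! ### Counting helpers -/

section CountHelpers

lemma abel_sum {f : ℕ → ℕ} (hf : ∀ i j, i ≤ j → f j ≤ f i) (k : ℕ) :
    (∑ i ∈ Finset.range k, (i + 1) * (f i - f (i + 1))) + k * f k
      = ∑ i ∈ Finset.range k, f i := by
  induction k with
  | zero => simp
  | succ m ih =>
    rw [Finset.sum_range_succ, Finset.sum_range_succ (f := f), ← ih]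
    have h : f (m + 1) ≤ f m := hf m (m + 1) (by omega)
    zify [h]
    ring

lemma telescope_sum {f : ℕ → ℕ} (hf : ∀ i j, i ≤ j → f j ≤ f i) {j k : ℕ} (hjk : j ≤ k) :
    ∑ i ∈ Finset.Ico j k, (f i - f (i + 1)) = f j - f k := by
  induction k, hjk using Nat.le_induction with
  | base => simp
  | succ m hjm ih =>
    rw [Finset.sum_Ico_succ_top hjm, ih]
    have h1 : f (m + 1) ≤ f m := hf m (m + 1) (by omega)
    have h2 : f m ≤ f j := hf j m hjm
    omega

lemma sum_Ico_swap (f : ℕ → ℕ) (k : ℕ) :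
    ∑ j ∈ Finset.range k, ∑ i ∈ Finset.Ico j k, f i
      = ∑ i ∈ Finset.range k, (i + 1) * f i := by
  induction k with
  | zero => simp
  | succ m ih =>
    have step : ∀ j ∈ Finset.range (m + 1), ∑ i ∈ Finset.Ico j (m + 1), f i
        = (∑ i ∈ Finset.Ico j m, f i) + f m := by
      intro j hj
      exact Finset.sum_Ico_succ_top (by simpa using Nat.lt_succ_iff.mp (Finset.mem_range.mp hj)) f
    rw [Finset.sum_congr rfl step, Finset.sum_add_distrib, Finset.sum_range_succ
      (f := fun j => ∑ i ∈ Finset.Ico j m, f i), ih, Finset.sum_range_succ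
      (f := fun i => (i + 1) * f i)]
    simp [Finset.sum_const, Finset.card_range, add_mul]

lemma countP_le_split (T : List ℕ) (x : ℕ) :
    T.countP (fun y => decide (x ≤ y)) = T.countP (fun y => decide (x + 1 ≤ y)) + T.count x := by
  induction T with
  | nil => simp
  | cons a T ih =>
    rw [List.countP_cons, List.countP_cons, List.count_cons, ih]
    by_cases h : a = x
    · subst h
      have : ¬ (a + 1 ≤ a) := by omega
      simp [this]
      omega
    · have hxa : ¬ (x = a) := fun hc => h hc.symm
      by_cases h2 : x ≤ a
      · have h3 : x + 1 ≤ a := by omega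
        simp [h2, h3, hxa, h]
        omega
      · have h3 : ¬ (x + 1 ≤ a) := by omega
        simp [h2, h3, hxa, h]

lemma Ico_insert_bot {a b : ℕ} (hab : a < b) :
    Finset.Ico a b = insert a (Finset.Ico (a + 1) b) := by
  ext i
  simp only [Finset.mem_Ico, Finset.mem_insert]
  omega

lemma partition_ext {n : ℕ} (π π' : n.Partition) (h : sparts π = sparts π') : π = π' := by
  have h1 : π.parts = π'.parts := by
    rw [← Multiset.sort_eq π.parts (· ≥ ·), ← Multiset.sort_eq π'.parts (· ≥ ·)]
    exact congrArg _ h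
  cases π; cases π'
  simpa using h1

/-- sorted positive lists with the same decomposition data agree -/
lemma eq_of_data {L L' : List ℕ} (hs : L.Pairwise (· ≥ ·)) (hs' : L'.Pairwise (· ≥ ·))
    (hpos : ∀ x ∈ L, 0 < x) (hpos' : ∀ x ∈ L', 0 < x) (hd : durfee L' = durfee L)
    (hA : ∀ i, aseq L i = aseq L' i) (hB : ∀ j, 1 ≤ j → bseq L j = bseq L' j) : L = L' := by
  set k := durfee L with hkdef
  set T := L.drop k with hTdef
  set T' := L'.drop k with hT'def
  have hTpos : ∀ x ∈ T, 0 < x := fun x hx => hpos x (List.mem_of_mem_drop hx)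
  have hT'pos : ∀ x ∈ T', 0 < x := fun x hx => hpos' x (List.mem_of_mem_drop hx)
  have hbseq : ∀ j, bseq L j = T.countP (fun y => decide (j ≤ y)) := fun j => rfl
  have hbseq' : ∀ j, bseq L' j = T'.countP (fun y => decide (j ≤ y)) := by
    intro j
    rw [bseq, hd]
  have hTeq : T = T' := by
    refine List.Perm.eq_of_pairwise'
      (List.Pairwise.sublist (List.drop_sublist _ _) hs)
      (List.Pairwise.sublist (List.drop_sublist _ _) hs') (List.perm_iff_count.mpr fun x => ?_)
    by_cases hx : x = 0
    · subst hx
      rw [List.count_eq_zero.mpr (fun hc => by have := hTpos 0 hc; omega),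
        List.count_eq_zero.mpr (fun hc => by have := hT'pos 0 hc; omega)]
    · have e1 := countP_le_split T x
      have e2 := countP_le_split T' x
      have e3 := hB x (by omega)
      have e4 := hB (x + 1) (by omega)
      rw [hbseq, hbseq'] at e3 e4
      omega
  have hkl : k ≤ L.length := durfee_le_length L
  have hkl' : k ≤ L'.length := by
    have := durfee_le_length L'
    omega
  have hlen : L.length = L'.length := by
    have e1 : T.length = L.length - k := List.length_drop
    have e2 : T'.length = L'.length - k := by rw [hT'def, List.length_drop]
    rw [hTeq] at e1
    omega
  apply List.ext_getElem hlen
  intro i h1 h2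
  by_cases hik : i < k
  · rw [← List.getD_eq_getElem L 0 h1, ← List.getD_eq_getElem L' 0 h2,
      getD_eq_add_aseq hs hik, getD_eq_add_aseq hs' (by omega), hA i, hd]
  · have e1 : L[i] = T[i - k]'(by rw [List.length_drop]; omega) := by
      rw [List.getElem_drop]
      congr 1
      omega
    have e2 : L'[i] = T'[i - k]'(by rw [hT'def, List.length_drop]; omega) := by
      rw [List.getElem_drop]
      congr 1
      omega
    rw [e1, e2]
    simp only [hTeq]

/-- Realize a sorted positive list with sum `n` as a partition of `n`. -/
def realizeAt (n : ℕ) (L : List ℕ) (hpos : ∀ x ∈ L, 0 < x) (hsum : L.sum = n) : n.Partition :=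
  ⟨(L : Multiset ℕ), fun hi => hpos _ hi, by rw [Multiset.sum_coe, hsum]⟩

lemma sparts_realizeAt {n : ℕ} {L : List ℕ} (hs : L.Pairwise (· ≥ ·)) (hpos : ∀ x ∈ L, 0 < x)
    (hsum : L.sum = n) : sparts (realizeAt n L hpos hsum) = L := by
  rw [sparts, realizeAt]
  refine List.Perm.eq_of_pairwise' (Multiset.pairwise_sort _ _) hs ?_
  rw [← Multiset.coe_eq_coe, Multiset.sort_eq]

end CountHelpers
/-! ### The main counting identity -/

section Count

/-- Multiplicity data of a partition list. -/
def dm (L : List ℕ) (j : ℕ) : ℕ × ℕ :=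
  (aseq L j - aseq L (j + 1), bseq L (j + 1) - bseq L (j + 2))

/-- The model set of multiplicity vectors. -/
def M (k n : ℕ) : Finset (Fin k → ℕ × ℕ) :=
  (Fintype.piFinset fun _ => Finset.range (n + 1) ×ˢ Finset.range (n + 1)).filter
    (fun c => (∀ j, (c j).1 = 0 ∨ (c j).2 = 0)
      ∧ ∑ j : Fin k, ((j : ℕ) + 1) * ((c j).1 + (c j).2) = n)

lemma dm_weight_sum {L : List ℕ} (hs : L.Pairwise (· ≥ ·)) {k : ℕ} (hd : durfee L = k) :
    ∑ i ∈ Finset.range k, (i + 1) * ((dm L i).1 + (dm L i).2)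
      = (∑ i ∈ Finset.range k, aseq L i) + ∑ i ∈ Finset.range k, bseq L (i + 1) := by
  have split : ∀ i ∈ Finset.range k, (i + 1) * ((dm L i).1 + (dm L i).2)
      = (i + 1) * (aseq L i - aseq L (i + 1)) + (i + 1) * (bseq L (i + 1) - bseq L (i + 2)) := by
    intro i _
    rw [dm, mul_add]
  rw [Finset.sum_congr rfl split, Finset.sum_add_distrib]
  have e1 := abel_sum (f := fun i => aseq L i) (fun i j hij => aseq_anti hs hij) k
  have e2 := abel_sum (f := fun i => bseq L (i + 1))
    (fun i j hij => bseq_anti L (by omega)) k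
  rw [aseq_zero hs (by omega)] at e1
  rw [bseq_zero hs (by omega)] at e2
  simpa using congrArg₂ (· + ·) e1 e2

lemma bCount_eq (n k : ℕ) :
    bCount n k = if k ^ 2 ≤ n then (M k (n - k ^ 2)).card else 0 := by
  classical
  have hkk : k ^ 2 = k * k := pow_two k
  have hrepr : bCount n k
      = ((Finset.univ : Finset (Nat.Partition n)).filter
          (fun π => IsBasis π ∧ durfee (sparts π) = k)).card := by
    rw [bCount, Nat.card_eq_fintype_card, Fintype.card_subtype]
  by_cases hn : k ^ 2 ≤ n
  · rw [if_pos hn, hrepr]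
    set m := n - k ^ 2 with hm
    apply Finset.card_bij (fun π _ => fun j : Fin k => dm (sparts π) j)
    · -- membership
      intro π hπ
      simp only [Finset.mem_filter, Finset.mem_univ, true_and] at hπ
      obtain ⟨hb, hd⟩ := hπ
      have hs := sparts_sorted π
      have hsum := sparts_sum π
      have hC := (isBasis_iff_cond π).mp hb
      have hseq := sum_eq hs
      rw [hd] at hseq
      have hw : ∑ i ∈ Finset.range k, (i + 1) * ((dm (sparts π) i).1 + (dm (sparts π) i).2)
          = m := by
        rw [dm_weight_sum hs hd]
        omega
      have hw2 : ∑ j : Fin k, ((j : ℕ) + 1) * ((dm (sparts π) (j : ℕ)).1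
          + (dm (sparts π) (j : ℕ)).2) = m := by
        rw [Fin.sum_univ_eq_sum_range (fun i => (i + 1) * ((dm (sparts π) i).1
          + (dm (sparts π) i).2)) k]
        exact hw
      rw [M, Finset.mem_filter]
      refine ⟨?_, ?_, hw2⟩
      · rw [Fintype.mem_piFinset]
        intro j
        rw [Finset.mem_product, Finset.mem_range, Finset.mem_range]
        have hterm : ((j : ℕ) + 1) * ((dm (sparts π) (j : ℕ)).1 + (dm (sparts π) (j : ℕ)).2)
            ≤ m := by
          rw [← hw]
          exact Finset.single_le_sum
            (f := fun i => (i + 1) * ((dm (sparts π) i).1 + (dm (sparts π) i).2))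
            (fun i _ => Nat.zero_le _) (Finset.mem_range.mpr j.isLt)
        have h1 : (dm (sparts π) (j : ℕ)).1 + (dm (sparts π) (j : ℕ)).2
            ≤ ((j : ℕ) + 1) * ((dm (sparts π) (j : ℕ)).1 + (dm (sparts π) (j : ℕ)).2) :=
          Nat.le_mul_of_pos_left _ (by omega)
        omega
      · intro j
        have hCj := hC (j : ℕ) (by rw [hd]; exact j.isLt)
        simp only [dm]
        omega
    · -- injectivity
      intro π hπ π' hπ' heq
      simp only [Finset.mem_filter, Finset.mem_univ, true_and] at hπ hπ'
      obtain ⟨hb, hd⟩ := hπ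
      obtain ⟨hb', hd'⟩ := hπ'
      have hs := sparts_sorted π
      have hs' := sparts_sorted π'
      have hdm : ∀ i < k, dm (sparts π) i = dm (sparts π') i := fun i hi =>
        congrFun heq ⟨i, hi⟩
      have hA : ∀ i, aseq (sparts π) i = aseq (sparts π') i := by
        intro i
        by_cases hik : k ≤ i
        · rw [aseq_zero hs (by omega), aseq_zero hs' (by omega)]
        · have t1 := telescope_sum (f := fun t => aseq (sparts π) t)
            (fun a b hab => aseq_anti hs hab) (le_of_lt (by omega : i < k))
          have t2 := telescope_sum (f := fun t => aseq (sparts π') t)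
            (fun a b hab => aseq_anti hs' hab) (le_of_lt (by omega : i < k))
          rw [aseq_zero hs (show durfee (sparts π) ≤ k by omega)] at t1
          rw [aseq_zero hs' (show durfee (sparts π') ≤ k by omega)] at t2
          have hsc : ∀ t ∈ Finset.Ico i k,
              aseq (sparts π) t - aseq (sparts π) (t + 1)
                = aseq (sparts π') t - aseq (sparts π') (t + 1) := by
            intro t ht
            have := congrArg Prod.fst (hdm t (Finset.mem_Ico.mp ht).2)
            simpa [dm] using this
          rw [Finset.sum_congr rfl hsc] at t1
          omega
      have hB : ∀ j, 1 ≤ j → bseq (sparts π) j = bseq (sparts π') j := by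
        intro j hj1
        by_cases hjk : k + 1 ≤ j
        · rw [bseq_zero hs (by omega), bseq_zero hs' (by omega)]
        · have t1 := telescope_sum (f := fun t => bseq (sparts π) (t + 1))
            (fun a b hab => bseq_anti _ (by omega)) (show j - 1 ≤ k by omega)
          have t2 := telescope_sum (f := fun t => bseq (sparts π') (t + 1))
            (fun a b hab => bseq_anti _ (by omega)) (show j - 1 ≤ k by omega)
          rw [bseq_zero hs (show durfee (sparts π) + 1 ≤ k + 1 by omega)] at t1
          rw [bseq_zero hs' (show durfee (sparts π') + 1 ≤ k + 1 by omega)] at t2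
          have hsc : ∀ t ∈ Finset.Ico (j - 1) k,
              bseq (sparts π) (t + 1) - bseq (sparts π) (t + 1 + 1)
                = bseq (sparts π') (t + 1) - bseq (sparts π') (t + 1 + 1) := by
            intro t ht
            have := congrArg Prod.snd (hdm t (Finset.mem_Ico.mp ht).2)
            simpa [dm] using this
          rw [Finset.sum_congr rfl hsc] at t1
          have hjj : j - 1 + 1 = j := by omega
          rw [hjj] at t1 t2
          omega
      exact partition_ext π π' (eq_of_data hs hs' (sparts_pos π) (sparts_pos π')
        (by omega) hA hB)
    · -- surjectivity
      intro c hc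
      rw [M, Finset.mem_filter, Fintype.mem_piFinset] at hc
      obtain ⟨hpi, hcond, hcsum⟩ := hc
      set cm : ℕ → ℕ := fun i => if h : i < k then (c ⟨i, h⟩).1 else 0 with hcm
      set cn : ℕ → ℕ := fun i => if h : i < k then (c ⟨i, h⟩).2 else 0 with hcn
      set A : ℕ → ℕ := fun i => ∑ t ∈ Finset.Ico i k, cm t with hAdef
      set B : ℕ → ℕ := fun j => ∑ t ∈ Finset.Ico (j - 1) k, cn t with hBdef
      have hAanti : ∀ i j, i ≤ j → A j ≤ A i := fun i j hij =>
        Finset.sum_le_sum_of_subset (Finset.Ico_subset_Ico hij (le_refl _))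
      have hBanti : ∀ i j, i ≤ j → B j ≤ B i := fun i j hij =>
        Finset.sum_le_sum_of_subset (Finset.Ico_subset_Ico (by omega) (le_refl _))
      have hAk : A k = 0 := by simp [hAdef]
      have hBk : B (k + 1) = 0 := by simp [hBdef]
      have hstepA : ∀ i, i < k → A i = cm i + A (i + 1) := by
        intro i hi
        rw [hAdef]
        simp only
        rw [Ico_insert_bot hi, Finset.sum_insert (by simp)]
      have hstepB : ∀ i, i < k → B (i + 1) = cn i + B (i + 2) := by
        intro i hi
        rw [hBdef]
        simp only [Nat.add_sub_cancel]
        have e1 : (i + 2) - 1 = i + 1 := by omega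
        rw [e1, Ico_insert_bot hi, Finset.sum_insert (by simp)]
      set L := build k A B with hLdef
      have hs : L.Pairwise (· ≥ ·) := build_sorted hAanti hBanti hBk
      have hpos : ∀ x ∈ L, 0 < x := fun x hx => build_pos hBanti hBk hx
      have hd : durfee L = k := build_durfee hAanti hBanti hBk
      have haseq : ∀ i, aseq L i = A i := fun i => build_aseq hAanti hBanti hBk i hAk
      have hbseq : ∀ j, 1 ≤ j → bseq L j = B j := fun j hj =>
        build_bseq hAanti hBanti hBk j hj
      have hdm : ∀ i, i < k → dm L i = (cm i, cn i) := by
        intro i hi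
        have a1 := haseq i
        have a2 := haseq (i + 1)
        have b1 := hbseq (i + 1) (by omega)
        have b2 := hbseq (i + 2) (by omega)
        have e1 := hstepA i hi
        have e2 := hstepB i hi
        simp only [dm, Prod.mk.injEq]
        constructor <;> omega
      have hsumL : L.sum = n := by
        have hseq := sum_eq hs
        rw [hd] at hseq
        have swA : ∑ i ∈ Finset.range k, aseq L i
            = ∑ i ∈ Finset.range k, (i + 1) * cm i := by
          rw [Finset.sum_congr rfl (fun i (_ : i ∈ Finset.range k) => haseq i)]
          simp only [hAdef]
          exact sum_Ico_swap cm k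
        have swB : ∑ i ∈ Finset.range k, bseq L (i + 1)
            = ∑ i ∈ Finset.range k, (i + 1) * cn i := by
          have h1 : ∀ i ∈ Finset.range k, bseq L (i + 1) = ∑ t ∈ Finset.Ico i k, cn t := by
            intro i _
            rw [hbseq (i + 1) (by omega)]
            simp only [hBdef, Nat.add_sub_cancel]
          rw [Finset.sum_congr rfl h1]
          exact sum_Ico_swap cn k
        rw [swA, swB] at hseq
        have hcsum' : ∑ i ∈ Finset.range k, (i + 1) * (cm i + cn i) = m := by
          rw [← hcsum]
          rw [← Fin.sum_univ_eq_sum_range (fun i => (i + 1) * (cm i + cn i)) k]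
          apply Finset.sum_congr rfl
          intro j _
          simp [hcm, hcn, j.isLt]
        have expand : ∀ i ∈ Finset.range k, (i + 1) * (cm i + cn i)
            = (i + 1) * cm i + (i + 1) * cn i := fun i _ => mul_add _ _ _
        rw [Finset.sum_congr rfl expand, Finset.sum_add_distrib] at hcsum'
        omega
      refine ⟨realizeAt n L hpos hsumL, ?_, ?_⟩
      · rw [Finset.mem_filter]
        refine ⟨Finset.mem_univ _, ?_, ?_⟩
        · rw [isBasis_iff_cond, sparts_realizeAt hs hpos hsumL]
          intro j hj
          rw [hd] at hj
          have e1 := hstepA j hj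
          have e2 := hstepB j hj
          have hcj := hcond ⟨j, hj⟩
          have e3 : (c ⟨j, hj⟩).1 = cm j := by simp [hcm, hj]
          have e4 : (c ⟨j, hj⟩).2 = cn j := by simp [hcn, hj]
          have a1 := haseq j
          have a2 := haseq (j + 1)
          have b1 := hbseq (j + 1) (by omega)
          have b2 := hbseq (j + 2) (by omega)
          omega
        · rw [sparts_realizeAt hs hpos hsumL]
          exact hd
      · funext j
        rw [sparts_realizeAt hs hpos hsumL, hdm (j : ℕ) j.isLt]
        have e3 : (c j).1 = cm (j : ℕ) := by simp [hcm, j.isLt]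
        have e4 : (c j).2 = cn (j : ℕ) := by simp [hcn, j.isLt]
        rw [← e3, ← e4]
  · rw [if_neg hn, hrepr]
    rw [Finset.card_eq_zero]
    ext π
    simp only [Finset.mem_filter, Finset.mem_univ, true_and, Finset.notMem_empty,
      iff_false, not_and]
    intro hb hd
    exfalso
    have hseq := sum_eq (sparts_sorted π)
    rw [hd, sparts_sum] at hseq
    omega

end Count
/-! ### Generating function -/

section GF

/-- Coefficients of `(1+X^s)/(1-X^s)`. -/
def wN (s q : ℕ) : ℕ := if q = 0 then 1 else if s ∣ q then 2 else 0

/-- The per-value solution set. -/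
def Wset (s q : ℕ) : Finset (ℕ × ℕ) :=
  (Finset.range (q + 1) ×ˢ Finset.range (q + 1)).filter
    (fun ab => (ab.1 = 0 ∨ ab.2 = 0) ∧ s * (ab.1 + ab.2) = q)

lemma Wcard {s : ℕ} (hs : 0 < s) (q : ℕ) : (Wset s q).card = wN s q := by
  classical
  by_cases hq : q = 0
  · subst hq
    have hset : Wset s 0 = {((0 : ℕ), (0 : ℕ))} := by
      ext ⟨a, b⟩
      simp only [Wset, Finset.mem_filter, Finset.mem_product, Finset.mem_range,
        Finset.mem_singleton, Prod.mk.injEq]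
      constructor
      · rintro ⟨-, -, hab⟩
        have : a + b = 0 := by
          by_contra hc
          have : 0 < s * (a + b) := Nat.mul_pos hs (by omega)
          omega
        omega
      · rintro ⟨rfl, rfl⟩
        simp
    rw [hset, Finset.card_singleton, wN, if_pos rfl]
  · by_cases hdvd : s ∣ q
    · obtain ⟨t, rfl⟩ := hdvd
      have ht : 0 < t := by
        rcases Nat.eq_zero_or_pos t with h | h
        · subst h; simp at hq
        · exact h
      have hts : t ≤ s * t := Nat.le_mul_of_pos_left t hs
      have hset : Wset s (s * t) = {((t : ℕ), (0 : ℕ)), ((0 : ℕ), (t : ℕ))} := by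
        ext ⟨a, b⟩
        simp only [Wset, Finset.mem_filter, Finset.mem_product, Finset.mem_range,
          Finset.mem_insert, Finset.mem_singleton, Prod.mk.injEq]
        constructor
        · rintro ⟨⟨-, -⟩, hor, hab⟩
          have habt : a + b = t := Nat.eq_of_mul_eq_mul_left hs hab
          omega
        · rintro (⟨rfl, rfl⟩ | ⟨rfl, rfl⟩)
          · exact ⟨⟨by omega, by omega⟩, Or.inr rfl, by ring⟩
          · exact ⟨⟨by omega, by omega⟩, Or.inl rfl, by ring⟩
      rw [hset, wN, if_neg hq, if_pos ⟨t, rfl⟩,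
        Finset.card_insert_of_notMem (by simp [Prod.ext_iff]; omega),
        Finset.card_singleton]
    · have hset : Wset s q = ∅ := by
        rw [Finset.eq_empty_iff_forall_notMem]
        rintro ⟨a, b⟩ hmem
        rw [Wset, Finset.mem_filter] at hmem
        exact hdvd ⟨a + b, hmem.2.2.symm⟩
      rw [hset, Finset.card_empty, wN, if_neg hq, if_neg hdvd]

lemma Mconv (k n : ℕ) :
    (M (k + 1) n).card
      = ∑ pq ∈ Finset.HasAntidiagonal.antidiagonal n, (M k pq.1).card * wN (k + 1) pq.2 := by
  classical
  have hterm : ∀ c ∈ M (k + 1) n,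
      (k + 1) * ((c (Fin.last k)).1 + (c (Fin.last k)).2) ≤ n := by
    intro c hc
    rw [M, Finset.mem_filter] at hc
    obtain ⟨-, -, hsum⟩ := hc
    calc (k + 1) * ((c (Fin.last k)).1 + (c (Fin.last k)).2)
        = ((Fin.last k : ℕ) + 1) * ((c (Fin.last k)).1 + (c (Fin.last k)).2) := by
          rw [Fin.val_last]
      _ ≤ ∑ j : Fin (k + 1), ((j : ℕ) + 1) * ((c j).1 + (c j).2) :=
          Finset.single_le_sum (f := fun j : Fin (k + 1) => ((j : ℕ) + 1) * ((c j).1 + (c j).2))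
            (fun i _ => Nat.zero_le _) (Finset.mem_univ _)
      _ = n := hsum
  have hmaps : ∀ c ∈ M (k + 1) n,
      (n - (k + 1) * ((c (Fin.last k)).1 + (c (Fin.last k)).2),
        (k + 1) * ((c (Fin.last k)).1 + (c (Fin.last k)).2)) ∈ Finset.HasAntidiagonal.antidiagonal n := by
    intro c hc
    rw [Finset.HasAntidiagonal.mem_antidiagonal]
    have := hterm c hc
    omega
  rw [Finset.card_eq_sum_card_fiberwise hmaps]
  apply Finset.sum_congr rfl
  rintro ⟨p, q⟩ hpq
  rw [Finset.HasAntidiagonal.mem_antidiagonal] at hpq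
  dsimp only at hpq ⊢
  rw [← Wcard (show 0 < k + 1 by omega) q, ← Finset.card_product]
  apply Finset.card_bij' (fun c _ => (Fin.init c, c (Fin.last k)))
    (fun d _ => Fin.snoc d.1 d.2)
  · intro c hc
    rw [Finset.mem_filter] at hc
    obtain ⟨hcM, hceq⟩ := hc
    have hq : (k + 1) * ((c (Fin.last k)).1 + (c (Fin.last k)).2) = q := by
      have := congrArg Prod.snd hceq
      simpa using this
    have hqn : q ≤ n := by rw [← hq]; exact hterm c hcM
    have hp : p = n - q := by omega
    rw [M, Finset.mem_filter] at hcM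
    obtain ⟨hpi, hcond, hsum⟩ := hcM
    rw [Fintype.mem_piFinset] at hpi
    have hsplit : (∑ i : Fin k, ((i : ℕ) + 1) * ((c i.castSucc).1 + (c i.castSucc).2)) + q
        = n := by
      rw [← hsum, Fin.sum_univ_castSucc]
      have e1 : ∀ i ∈ Finset.univ, ((Fin.castSucc i : ℕ) + 1)
          * ((c i.castSucc).1 + (c i.castSucc).2)
          = ((i : ℕ) + 1) * ((c i.castSucc).1 + (c i.castSucc).2) := fun i _ => by
        rw [Fin.coe_castSucc]
      rw [Finset.sum_congr rfl e1, Fin.val_last, hq]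
    rw [Finset.mem_product]
    constructor
    · show Fin.init c ∈ M k p
      rw [M, Finset.mem_filter, Fintype.mem_piFinset]
      have hinit : ∀ i : Fin k, Fin.init c i = c i.castSucc := fun i => rfl
      refine ⟨?_, ?_, ?_⟩
      · intro i
        rw [hinit, Finset.mem_product, Finset.mem_range, Finset.mem_range]
        have h1 : ((i : ℕ) + 1) * ((c i.castSucc).1 + (c i.castSucc).2)
            ≤ ∑ i : Fin k, ((i : ℕ) + 1) * ((c i.castSucc).1 + (c i.castSucc).2) :=
          Finset.single_le_sum
            (f := fun i : Fin k => ((i : ℕ) + 1) * ((c i.castSucc).1 + (c i.castSucc).2))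
            (fun i _ => Nat.zero_le _) (Finset.mem_univ _)
        have h2 : (c i.castSucc).1 + (c i.castSucc).2
            ≤ ((i : ℕ) + 1) * ((c i.castSucc).1 + (c i.castSucc).2) :=
          Nat.le_mul_of_pos_left _ (by omega)
        omega
      · intro i
        rw [hinit]
        exact hcond _
      · rw [Finset.sum_congr rfl (fun i (_ : i ∈ Finset.univ) => by rw [hinit i])]
        omega
    · show c (Fin.last k) ∈ Wset (k + 1) q
      rw [Wset, Finset.mem_filter, Finset.mem_product, Finset.mem_range, Finset.mem_range]
      have h2 : (c (Fin.last k)).1 + (c (Fin.last k)).2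
          ≤ (k + 1) * ((c (Fin.last k)).1 + (c (Fin.last k)).2) :=
        Nat.le_mul_of_pos_left _ (by omega)
      exact ⟨⟨by omega, by omega⟩, hcond _, hq⟩
  · rintro ⟨d, ab⟩ hd
    rw [Finset.mem_product] at hd
    obtain ⟨hdM, hab⟩ := hd
    dsimp only at hdM hab ⊢
    rw [M, Finset.mem_filter, Fintype.mem_piFinset] at hdM
    obtain ⟨hpi, hcond, hsum⟩ := hdM
    rw [Wset, Finset.mem_filter, Finset.mem_product, Finset.mem_range, Finset.mem_range] at hab
    obtain ⟨⟨hab1, hab2⟩, habor, habq⟩ := hab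
    have hqn : q ≤ n := by omega
    have hpn : p ≤ n := by omega
    rw [Finset.mem_filter]
    constructor
    · rw [M, Finset.mem_filter, Fintype.mem_piFinset]
      refine ⟨?_, ?_, ?_⟩
      · intro j
        rcases Fin.eq_castSucc_or_eq_last j with ⟨i, rfl⟩ | rfl
        · simp only [Fin.snoc_castSucc]
          have := hpi i
          rw [Finset.mem_product, Finset.mem_range, Finset.mem_range] at this ⊢
          omega
        · simp only [Fin.snoc_last]
          rw [Finset.mem_product, Finset.mem_range, Finset.mem_range]
          omega
      · intro j
        rcases Fin.eq_castSucc_or_eq_last j with ⟨i, rfl⟩ | rfl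
        · simp only [Fin.snoc_castSucc]
          exact hcond i
        · simp only [Fin.snoc_last]
          exact habor
      · rw [Fin.sum_univ_castSucc]
        simp only [Fin.snoc_castSucc, Fin.snoc_last, Fin.coe_castSucc, Fin.val_last]
        omega
    · simp only [Fin.snoc_last]
      rw [habq]
      have hnq : n - q = p := by omega
      rw [hnq]
  · intro c hc
    exact Fin.snoc_init_self c
  · rintro ⟨d, ab⟩ hd
    rw [Fin.init_snoc, Fin.snoc_last]

lemma geom_factor (s : ℕ) (hs : 0 < s) :
    (1 + (PowerSeries.X : PowerSeries ℚ) ^ s) * (1 - PowerSeries.X ^ s)⁻¹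
      = PowerSeries.mk (fun q => (wN s q : ℚ)) := by
  have hunit : PowerSeries.constantCoeff (1 - PowerSeries.X ^ s : PowerSeries ℚ) ≠ 0 := by
    rw [map_sub, map_one, map_pow, PowerSeries.constantCoeff_X,
      zero_pow (by omega : s ≠ 0), sub_zero]
    exact one_ne_zero
  have w0 : wN s 0 = 1 := if_pos rfl
  have wself : wN s s = 2 := by rw [wN, if_neg (by omega), if_pos (dvd_refl s)]
  have wlt : ∀ m, 0 < m → m < s → wN s m = 0 := by
    intro m h1 h2
    rw [wN, if_neg (by omega), if_neg]
    rintro ⟨t, rfl⟩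
    rcases Nat.eq_zero_or_pos t with rfl | ht
    · omega
    · have := Nat.le_mul_of_pos_right s ht
      omega
  have wD : ∀ m, s < m → wN s m = wN s (m - s) := by
    intro m hm
    have hms : m - s ≠ 0 := by omega
    by_cases hdvd : s ∣ m
    · rw [wN, wN, if_neg (by omega), if_neg hms, if_pos hdvd,
        if_pos (Nat.dvd_sub hdvd (dvd_refl s))]
    · rw [wN, wN, if_neg (by omega), if_neg hms, if_neg hdvd, if_neg]
      intro h
      refine hdvd ?_
      have h2 := Nat.dvd_add h (dvd_refl s)
      rwa [Nat.sub_add_cancel (by omega)] at h2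
  have key : PowerSeries.mk (fun q => (wN s q : ℚ)) * (1 - PowerSeries.X ^ s)
      = 1 + PowerSeries.X ^ s := by
    apply PowerSeries.ext
    intro n
    rw [mul_sub, mul_one, map_sub, PowerSeries.coeff_mul_X_pow', map_add,
      PowerSeries.coeff_one, PowerSeries.coeff_X_pow, PowerSeries.coeff_mk]
    by_cases h0 : n = 0
    · subst h0
      rw [if_neg (by omega : ¬ s ≤ 0), if_pos rfl, if_neg (by omega : ¬ (0 : ℕ) = s), w0]
      norm_num
    · rw [if_neg h0]
      by_cases hns : n = s
      · subst hns
        rw [if_pos (le_refl n), if_pos rfl, PowerSeries.coeff_mk, Nat.sub_self, w0, wself]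
        norm_num
      · rw [if_neg hns]
        by_cases hlt : n < s
        · rw [if_neg (by omega), wlt n (by omega) hlt]
          norm_num
        · rw [if_pos (by omega : s ≤ n), PowerSeries.coeff_mk, ← wD n (by omega)]
          norm_num
  calc (1 + (PowerSeries.X : PowerSeries ℚ) ^ s) * (1 - PowerSeries.X ^ s)⁻¹
      = (PowerSeries.mk (fun q => (wN s q : ℚ)) * (1 - PowerSeries.X ^ s))
          * (1 - PowerSeries.X ^ s)⁻¹ := by rw [key]
    _ = PowerSeries.mk (fun q => (wN s q : ℚ))
          * ((1 - PowerSeries.X ^ s) * (1 - PowerSeries.X ^ s)⁻¹) := by ring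
    _ = PowerSeries.mk (fun q => (wN s q : ℚ)) := by
        rw [PowerSeries.mul_inv_cancel _ hunit, mul_one]

lemma M_zero_card (n : ℕ) : (M 0 n).card = if n = 0 then 1 else 0 := by
  classical
  by_cases hn : n = 0
  · subst hn
    rw [if_pos rfl]
    apply Finset.card_eq_one.mpr
    refine ⟨fun j => j.elim0, ?_⟩
    ext c
    simp only [M, Finset.mem_filter, Fintype.mem_piFinset, Finset.mem_singleton]
    constructor
    · intro _
      funext j
      exact j.elim0
    · rintro rfl
      refine ⟨fun j => j.elim0, fun j => j.elim0, by simp⟩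
  · rw [if_neg hn, Finset.card_eq_zero]
    ext c
    simp only [M, Finset.mem_filter, Finset.notMem_empty, iff_false, not_and]
    rintro - - hsum
    rw [Finset.univ_eq_empty, Finset.sum_empty] at hsum
    exact hn hsum.symm

lemma coeff_prod_eq (k : ℕ) : ∀ n : ℕ,
    (PowerSeries.coeff n) (∏ j ∈ Finset.range k,
      (1 + PowerSeries.X ^ (j + 1)) * (1 - PowerSeries.X ^ (j + 1) : PowerSeries ℚ)⁻¹)
      = ((M k n).card : ℚ) := by
  induction k with
  | zero =>
    intro n
    rw [Finset.range_zero, Finset.prod_empty, PowerSeries.coeff_one, M_zero_card]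
    split_ifs <;> norm_num
  | succ k ih =>
    intro n
    rw [Finset.prod_range_succ, PowerSeries.coeff_mul]
    have hcong : ∀ pq ∈ Finset.HasAntidiagonal.antidiagonal n,
        (PowerSeries.coeff pq.1) (∏ j ∈ Finset.range k,
          (1 + PowerSeries.X ^ (j + 1)) * (1 - PowerSeries.X ^ (j + 1) : PowerSeries ℚ)⁻¹)
          * (PowerSeries.coeff pq.2)
            ((1 + PowerSeries.X ^ (k + 1)) * (1 - PowerSeries.X ^ (k + 1) : PowerSeries ℚ)⁻¹)
          = ((M k pq.1).card : ℚ) * (wN (k + 1) pq.2 : ℚ) := by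
      intro pq _
      rw [ih, geom_factor (k + 1) (by omega), PowerSeries.coeff_mk]
    rw [Finset.sum_congr rfl hcong, Mconv]
    push_cast
    rfl

end GF

theorem statement1 (k : ℕ) :
    (PowerSeries.mk fun n => (bCount n k : ℚ)) =
      PowerSeries.X ^ (k ^ 2) *
        ∏ j ∈ Finset.range k,
          (1 + PowerSeries.X ^ (j + 1)) * (1 - PowerSeries.X ^ (j + 1) : PowerSeries ℚ)⁻¹ := by
  apply PowerSeries.ext
  intro n
  rw [PowerSeries.coeff_mk, bCount_eq, mul_comm (PowerSeries.X ^ k ^ 2 : PowerSeries ℚ),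
    PowerSeries.coeff_mul_X_pow']
  by_cases hn : k ^ 2 ≤ n
  · rw [if_pos hn, if_pos hn, coeff_prod_eq]
  · rw [if_neg hn, if_neg hn]
    norm_num

end BasisPartitions
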